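/- arXiv:2510.20675 — 4 statements merged into one kernel-verified Lean document; each statement's English description precedes it below -/
import Mathlib

section
/- Let L ∈ C^{n×n} and let P ∈ C^{n×n} be a projector (P^2 = P), Q = I − P. Then for every x_0 ∈ C^n and t ≥ 0, the trajectory x_t = e^{Lt} x_0 satisfies Q x_t = e^{QLQ t} Q x_0 + ∫_0^t e^{QLQ s} Q L P x_{t−s} ds. -/
open Matrix intervalIntegral

attribute [local instance] Matrix.linftyOpNormedRing Matrix.linftyOpNormedAlgebra

/-- For a projector `P` (`Q = 1 - P`) and the trajectory
`x_t = e^{Lt} x_0`, one has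
`Q x_t = e^{QLQ t} Q x_0 + ∫_0^t e^{QLQ s} Q L P x_{t−s} ds`. -/
theorem nakajima_zwanzig_Q_part (n : ℕ)
    (L P : Matrix (Fin n) (Fin n) ℂ) (hP : P * P = P)
    (Q : Matrix (Fin n) (Fin n) ℂ) (hQ : Q = 1 - P)
    (x₀ : Fin n → ℂ) (t : ℝ) (ht : 0 ≤ t) :
    Q.mulVec ((NormedSpace.exp (t • L)).mulVec x₀) =
      (NormedSpace.exp (t • (Q * L * Q))).mulVec (Q.mulVec x₀) +
      ∫ s in (0 : ℝ)..t,
        (NormedSpace.exp (s • (Q * L * Q))).mulVec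
          ((Q * L * P).mulVec ((NormedSpace.exp ((t - s) • L)).mulVec x₀)) := by
  set A := Q * L * Q with hA
  -- basic algebra
  have hQQ : Q * Q = Q := by
    rw [hQ, mul_sub, sub_mul, sub_mul, one_mul, one_mul, mul_one, hP]; abel
  have hAQ : A * Q = A := by
    rw [hA, mul_assoc (Q * L) Q Q, hQQ]
  have hkey : A - Q * L = -(Q * L * P) := by
    rw [hA, hQ]; noncomm_ring
  -- the continuous linear map  M ↦ M.mulVec x₀
  let φ : Matrix (Fin n) (Fin n) ℂ →L[ℝ] (Fin n → ℂ) :=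
    LinearMap.toContinuousLinearMap
      { toFun := fun M => M.mulVec x₀
        map_add' := fun M N => Matrix.add_mulVec M N x₀
        map_smul' := fun r M => Matrix.smul_mulVec r M x₀ }
  have hφ : ∀ M : Matrix (Fin n) (Fin n) ℂ, φ M = M.mulVec x₀ := fun _ => rfl
  -- the interpolating function
  set F : ℝ → (Fin n → ℂ) := fun s =>
    φ (NormedSpace.exp (s • A) * Q * NormedSpace.exp ((t - s) • L)) with hF
  set G : ℝ → (Fin n → ℂ) := fun s =>
    φ (-(NormedSpace.exp (s • A) * (Q * L * P) * NormedSpace.exp ((t - s) • L))) with hG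
  have hder : ∀ s : ℝ, HasDerivAt F (G s) s := by
    intro s
    have h1 : HasDerivAt (fun u : ℝ => NormedSpace.exp (u • A))
        (NormedSpace.exp (s • A) * A) s := by
      exact hasDerivAt_exp_smul_const (𝕂 := ℝ) A s
    have h2 : HasDerivAt (fun u : ℝ => NormedSpace.exp (u • L))
        (L * NormedSpace.exp ((t - s) • L)) (t - s) := by
      exact hasDerivAt_exp_smul_const' (𝕂 := ℝ) L (t - s)
    have h3 : HasDerivAt (fun u : ℝ => t - u) (-1 : ℝ) s := by
      simpa using (hasDerivAt_id s).const_sub t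
    have h4 : HasDerivAt (fun u : ℝ => NormedSpace.exp ((t - u) • L))
        (-(L * NormedSpace.exp ((t - s) • L))) s := by
      have := h2.scomp s h3
      rw [neg_one_smul] at this
      exact this
    have h5 : HasDerivAt
        (fun u : ℝ => NormedSpace.exp (u • A) * Q * NormedSpace.exp ((t - u) • L))
        ((NormedSpace.exp (s • A) * A * Q) * NormedSpace.exp ((t - s) • L) +
          (NormedSpace.exp (s • A) * Q) * (-(L * NormedSpace.exp ((t - s) • L)))) s :=
      (h1.mul_const Q).mul h4
    have hD : (NormedSpace.exp (s • A) * A * Q) * NormedSpace.exp ((t - s) • L) +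
          (NormedSpace.exp (s • A) * Q) * (-(L * NormedSpace.exp ((t - s) • L))) =
        -(NormedSpace.exp (s • A) * (Q * L * P) * NormedSpace.exp ((t - s) • L)) := by
      have : NormedSpace.exp (s • A) * A * Q = NormedSpace.exp (s • A) * A := by
        rw [mul_assoc, hAQ]
      rw [this]
      calc NormedSpace.exp (s • A) * A * NormedSpace.exp ((t - s) • L) +
            NormedSpace.exp (s • A) * Q * (-(L * NormedSpace.exp ((t - s) • L)))
          = NormedSpace.exp (s • A) * (A - Q * L) * NormedSpace.exp ((t - s) • L) := by
            noncomm_ring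
        _ = -(NormedSpace.exp (s • A) * (Q * L * P) * NormedSpace.exp ((t - s) • L)) := by
            rw [hkey]; noncomm_ring
    rw [hF, hG]
    exact φ.hasFDerivAt.comp_hasDerivAt s (hD ▸ h5)
  have hcont : Continuous G := by
    rw [hG]
    refine φ.continuous.comp ?_
    have hc1 : Continuous fun s : ℝ => NormedSpace.exp (s • A) :=
      NormedSpace.exp_continuous.comp (by fun_prop)
    have hc2 : Continuous fun s : ℝ => NormedSpace.exp ((t - s) • L) :=
      NormedSpace.exp_continuous.comp (by fun_prop)
    exact ((hc1.mul continuous_const).mul hc2).neg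
  have hFTC : ∫ s in (0 : ℝ)..t, G s = F t - F 0 :=
    intervalIntegral.integral_eq_sub_of_hasDerivAt (fun s _ => hder s)
      (hcont.intervalIntegrable 0 t)
  have hint : (∫ s in (0 : ℝ)..t,
        (NormedSpace.exp (s • A)).mulVec
          ((Q * L * P).mulVec ((NormedSpace.exp ((t - s) • L)).mulVec x₀))) =
      F 0 - F t := by
    have : ∀ s : ℝ, (NormedSpace.exp (s • A)).mulVec
          ((Q * L * P).mulVec ((NormedSpace.exp ((t - s) • L)).mulVec x₀)) = -(G s) := by
      intro s
      simp only [hG, hφ, neg_neg, Matrix.neg_mulVec, Matrix.mulVec_mulVec, mul_assoc]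
    rw [intervalIntegral.integral_congr (fun s _ => this s), intervalIntegral.integral_neg,
      hFTC]
    abel
  rw [hint]
  simp only [hF, hφ, zero_smul, sub_zero, sub_self, NormedSpace.exp_zero, mul_one, one_mul,
    Matrix.mulVec_mulVec]
  abel
end

section
/- Let L ∈ C^{n×n}, let P be a projector with Q = I − P, and define M_t = I − ∫_0^t e^{QLQ s} Q L P e^{−L s} ds. If M_t is invertible and x_0 satisfies P x_0 = x_0, then the projected trajectory satisfies the time-local equation d/dt (P e^{Lt} x_0) = P L M_t^{-1} P (e^{Lt} x_0). -/
open Matrix intervalIntegral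

attribute [local instance] Matrix.linftyOpNormedRing Matrix.linftyOpNormedAlgebra

private lemma expD {n : ℕ} (A : Matrix (Fin n) (Fin n) ℂ) (s : ℝ) :
    HasDerivAt (fun u : ℝ => NormedSpace.exp (u • A))
      (NormedSpace.exp (s • A) * A) s := by
  have h := hasDerivAt_exp_smul_const (𝕂 := ℝ) A s
  exact h

private lemma expD' {n : ℕ} (A : Matrix (Fin n) (Fin n) ℂ) (s : ℝ) :
    HasDerivAt (fun u : ℝ => NormedSpace.exp (u • A))
      (A * NormedSpace.exp (s • A)) s := by
  have h := hasDerivAt_exp_smul_const' (𝕂 := ℝ) A s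
  exact h

private lemma expCont {n : ℕ} (A : Matrix (Fin n) (Fin n) ℂ) :
    Continuous (fun s : ℝ => NormedSpace.exp (s • A)) :=
  NormedSpace.exp_continuous.comp (continuous_id.smul continuous_const)

/-- With `M_t = I − ∫_0^t e^{QLQ s} Q L P e^{−L s} ds`, if `M_t` is
invertible and `P x_0 = x_0`, then
`d/dt (P e^{Lt} x_0) = P L M_t^{-1} P (e^{Lt} x_0)`. -/
theorem time_local_projected_equation (n : ℕ)
    (L P : Matrix (Fin n) (Fin n) ℂ) (hP : P * P = P)
    (Q : Matrix (Fin n) (Fin n) ℂ) (hQ : Q = 1 - P)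
    (M : ℝ → Matrix (Fin n) (Fin n) ℂ)
    (hM : ∀ t : ℝ, M t = 1 - ∫ s in (0 : ℝ)..t,
      NormedSpace.exp (s • (Q * L * Q)) * (Q * L * P) * NormedSpace.exp (-(s • L)))
    (x₀ : Fin n → ℂ) (hx₀ : P.mulVec x₀ = x₀)
    (t : ℝ) (hMt : IsUnit (M t)) :
    ∀ i, HasDerivAt
      (fun u : ℝ => (P.mulVec ((NormedSpace.exp (u • L)).mulVec x₀)) i)
      (((P * L * (M t)⁻¹ * P).mulVec ((NormedSpace.exp (t • L)).mulVec x₀)) i) t := by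
  have hQQ : Q * Q = Q := by
    rw [hQ]
    calc (1 - P) * (1 - P) = 1 - P - P + P * P := by noncomm_ring
    _ = 1 - P := by rw [hP]; abel
  have h5 : Q * L * Q = Q * L - Q * L * P := by rw [hQ]; noncomm_ring
  have h4 : Q * L * Q * Q = Q * L * Q := by rw [mul_assoc (Q * L) Q Q, hQQ]
  -- derivative of the auxiliary function g(s) = e^{sA} Q e^{(t-s)L}
  have hder : ∀ s : ℝ, HasDerivAt
      (fun u : ℝ => NormedSpace.exp (u • (Q * L * Q)) * Q *
        NormedSpace.exp ((t - u) • L))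
      (-(NormedSpace.exp (s • (Q * L * Q)) * (Q * L * P) *
        NormedSpace.exp ((t - s) • L))) s := by
    intro s
    have h1 := expD (Q * L * Q) s
    have hinner : HasDerivAt (fun u : ℝ => t - u) (-1) s := (hasDerivAt_id s).const_sub t
    have h2 : HasDerivAt (fun u : ℝ => NormedSpace.exp ((t - u) • L))
        (-(L * NormedSpace.exp ((t - s) • L))) s := by
      have := (expD' L (t - s)).scomp s hinner
      simp at this; exact this
    have h3 := (h1.mul_const Q).mul h2
    convert h3 using 1
    · rfl
    · rfl
    · rfl
    · rfl
    rw [mul_assoc (NormedSpace.exp (s • (Q * L * Q))) (Q * L * Q) Q, h4, h5]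
    noncomm_ring
  -- continuity / integrability
  have hcont : Continuous fun s : ℝ =>
      NormedSpace.exp (s • (Q * L * Q)) * (Q * L * P) *
        NormedSpace.exp (-(s • L)) := by
    have : Continuous fun s : ℝ => NormedSpace.exp (-(s • L)) := by
      have h := expCont (-L) (n := n)
      simpa [smul_neg] using h
    exact ((expCont (Q * L * Q)).mul continuous_const).mul this
  have hcont' : Continuous fun s : ℝ =>
      NormedSpace.exp (s • (Q * L * Q)) * (Q * L * P) *
        NormedSpace.exp ((t - s) • L) :=
    ((expCont (Q * L * Q)).mul continuous_const).mul
      (NormedSpace.exp_continuous.comp ((continuous_const.sub continuous_id).smul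
        continuous_const))
  -- FTC
  have hFTC := intervalIntegral.integral_eq_sub_of_hasDerivAt (a := 0) (b := t)
    (fun s _ => hder s) ((hcont'.neg).intervalIntegrable 0 t)
  have hI1 : (∫ s in (0:ℝ)..t,
      NormedSpace.exp (s • (Q * L * Q)) * (Q * L * P) *
        NormedSpace.exp ((t - s) • L))
      = Q * NormedSpace.exp (t • L) -
        NormedSpace.exp (t • (Q * L * Q)) * Q := by
    rw [intervalIntegral.integral_neg] at hFTC
    have h := neg_eq_iff_eq_neg.mp hFTC
    rw [h, neg_sub]
    simp [NormedSpace.exp_zero]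
  -- relate to the integrand of M
  have hexp : ∀ s : ℝ, NormedSpace.exp (-(s • L)) * NormedSpace.exp (t • L)
      = NormedSpace.exp ((t - s) • L) := by
    intro s
    erw [← NormedSpace.exp_add_of_commute (((Commute.refl L).smul_left s).smul_right t).neg_left]
    congr 1
    rw [sub_smul]
    abel
  have hInt : @IntervalIntegrable (Matrix (Fin n) (Fin n) ℂ)
      PseudoMetricSpace.toUniformSpace.toTopologicalSpace _
      (fun s : ℝ => NormedSpace.exp (s • (Q * L * Q)) * (Q * L * P) *
        NormedSpace.exp (-(s • L))) MeasureTheory.volume 0 t :=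
    hcont.intervalIntegrable 0 t
  have hI2 := ContinuousLinearMap.intervalIntegral_comp_comm
      ((ContinuousLinearMap.mul ℂ (Matrix (Fin n) (Fin n) ℂ)).flip
        (NormedSpace.exp (t • L))) hInt
  simp only [ContinuousLinearMap.flip_apply, ContinuousLinearMap.mul_apply'] at hI2
  have hN : (∫ s in (0:ℝ)..t,
      NormedSpace.exp (s • (Q * L * Q)) * (Q * L * P) *
        NormedSpace.exp (-(s • L))) * NormedSpace.exp (t • L)
      = Q * NormedSpace.exp (t • L) -
        NormedSpace.exp (t • (Q * L * Q)) * Q := by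
    rw [← hI2, ← hI1]
    apply intervalIntegral.integral_congr
    intro s _
    simp only [mul_assoc, hexp s]
  -- matra identity for M t * e^{tL}
  have hP1 : (1 : Matrix (Fin n) (Fin n) ℂ) - Q = P := by rw [hQ, sub_sub_cancel]
  have hmm : M t * NormedSpace.exp (t • L)
      = P * NormedSpace.exp (t • L) + NormedSpace.exp (t • (Q * L * Q)) * Q := by
    rw [hM t, sub_mul, one_mul, hN, ← hP1]
    noncomm_ring
  have hQx : Q.mulVec x₀ = 0 := by
    rw [hQ, Matrix.sub_mulVec, Matrix.one_mulVec, hx₀, sub_self]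
  have hkey : (M t).mulVec ((NormedSpace.exp (t • L)).mulVec x₀)
      = (P * NormedSpace.exp (t • L)).mulVec x₀ := by
    rw [Matrix.mulVec_mulVec, hmm, Matrix.add_mulVec,
      ← Matrix.mulVec_mulVec x₀ (NormedSpace.exp (t • (Q * L * Q))) Q, hQx,
      Matrix.mulVec_zero, add_zero]
  -- invertibility
  have hinv : (M t)⁻¹ * M t = 1 :=
    Matrix.nonsing_inv_mul _ ((Matrix.isUnit_iff_isUnit_det _).mp hMt)
  have hcomm : NormedSpace.exp (t • L) * L = L * NormedSpace.exp (t • L) :=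
    (((Commute.refl L).smul_left t).exp_left).eq
  have hm2 : P * (NormedSpace.exp (t • L) * L)
      = P * L * (M t)⁻¹ * M t * NormedSpace.exp (t • L) := by
    rw [hcomm, mul_assoc (P * L) ((M t)⁻¹) (M t), hinv, mul_one, ← mul_assoc]
  have hkey' : (M t).mulVec ((NormedSpace.exp (t • L)).mulVec x₀)
      = P.mulVec ((NormedSpace.exp (t • L)).mulVec x₀) := by
    rw [hkey, ← Matrix.mulVec_mulVec]
  have hval : (P * (NormedSpace.exp (t • L) * L)).mulVec x₀
      = (P * L * (M t)⁻¹ * P).mulVec ((NormedSpace.exp (t • L)).mulVec x₀) := by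
    rw [hm2]
    simp only [← Matrix.mulVec_mulVec]
    rw [hkey']
  -- the derivative, componentwise
  intro i
  have hE := expD L t
  let φ : Matrix (Fin n) (Fin n) ℂ →ₗ[ℝ] ℂ :=
    { toFun := fun A => ((P * A).mulVec x₀) i
      map_add' := fun A B => by simp [Matrix.mul_add, Matrix.add_mulVec]
      map_smul' := fun r A => by
        simp [Matrix.mul_smul, Matrix.smul_mulVec] }
  have hφ := (LinearMap.toContinuousLinearMap φ).hasFDerivAt.comp_hasDerivAt t hE
  have hφ' : HasDerivAt
      (fun u : ℝ => ((P * NormedSpace.exp (u • L)).mulVec x₀) i)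
      (((P * (NormedSpace.exp (t • L) * L)).mulVec x₀) i) t := by
    exact hφ
  have hfun : (fun u : ℝ => (P.mulVec ((NormedSpace.exp (u • L)).mulVec x₀)) i)
      = fun u : ℝ => ((P * NormedSpace.exp (u • L)).mulVec x₀) i := by
    funext u; rw [Matrix.mulVec_mulVec]
  rw [hfun, ← congrFun hval i]
  exact hφ'
end

section
/- With the bipartite setup H = Σ_k S_k ⊗ E_k, τ a density operator on the environment, R = tr_E, J(μ) = μ ⊗ τ, L(ρ) = −i[H,ρ]: the second-order coefficient F_{(2)} = R L^2 J − (R L J)^2 equals μ ↦ Σ_{j,k} χ_{j,k} (2 S_j μ S_k − {S_k S_j, μ}), where χ_{j,k} = tr(E_j τ E_k) − tr(τ E_j) tr(τ E_k). -/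
open Matrix Kronecker

/-- Partial trace over the second (environment) tensor factor. -/
noncomputable def ptraceE {dS dE : ℕ} (ρ : Matrix (Fin dS × Fin dE) (Fin dS × Fin dE) ℂ) :
    Matrix (Fin dS) (Fin dS) ℂ :=
  Matrix.of fun i j => ∑ e : Fin dE, ρ (i, e) (j, e)

section helpers
variable {dS dE : ℕ}

lemma ptraceE_sub (A B : Matrix (Fin dS × Fin dE) (Fin dS × Fin dE) ℂ) :
    ptraceE (A - B) = ptraceE A - ptraceE B := by
  ext i j; simp [ptraceE, Finset.sum_sub_distrib]

lemma ptraceE_smul (c : ℂ) (A : Matrix (Fin dS × Fin dE) (Fin dS × Fin dE) ℂ) :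
    ptraceE (c • A) = c • ptraceE A := by
  ext i j; simp [ptraceE]
  exact (Finset.mul_sum _ _ _).symm

lemma ptraceE_sum {r : ℕ} (f : Fin r → Matrix (Fin dS × Fin dE) (Fin dS × Fin dE) ℂ) :
    ptraceE (∑ k, f k) = ∑ k, ptraceE (f k) := by
  ext i j; simp [ptraceE, Matrix.sum_apply]; rw [Finset.sum_comm]

lemma ptraceE_kron (A : Matrix (Fin dS) (Fin dS) ℂ) (B : Matrix (Fin dE) (Fin dE) ℂ) :
    ptraceE (A ⊗ₖ B) = B.trace • A := by
  ext i j
  simp only [ptraceE, Matrix.of_apply, kroneckerMap_apply, Matrix.smul_apply, smul_eq_mul,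
    Matrix.trace, Matrix.diag, Finset.sum_mul]
  exact Finset.sum_congr rfl fun _ _ => mul_comm _ _

lemma sub_kron (A B : Matrix (Fin dS) (Fin dS) ℂ) (C : Matrix (Fin dE) (Fin dE) ℂ) :
    (A - B) ⊗ₖ C = A ⊗ₖ C - B ⊗ₖ C := by
  ext ⟨i, e⟩ ⟨i', e'⟩; simp [sub_mul]

lemma sum_kron {r : ℕ} (f : Fin r → Matrix (Fin dS) (Fin dS) ℂ)
    (C : Matrix (Fin dE) (Fin dE) ℂ) :
    (∑ k, f k) ⊗ₖ C = ∑ k, (f k) ⊗ₖ C := by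
  ext ⟨i, e⟩ ⟨i', e'⟩; simp [Matrix.sum_apply, Finset.sum_mul]

lemma comm_expand {r : ℕ} (S : Fin r → Matrix (Fin dS) (Fin dS) ℂ)
    (E : Fin r → Matrix (Fin dE) (Fin dE) ℂ)
    (A : Matrix (Fin dS) (Fin dS) ℂ) (B : Matrix (Fin dE) (Fin dE) ℂ) :
    ptraceE ((∑ k, S k ⊗ₖ E k) * (A ⊗ₖ B) - (A ⊗ₖ B) * (∑ k, S k ⊗ₖ E k))
      = ∑ k, ((E k * B).trace • (S k * A) - (B * E k).trace • (A * S k)) := by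
  rw [Matrix.sum_mul, Matrix.mul_sum, ← Finset.sum_sub_distrib, ptraceE_sum]
  exact Finset.sum_congr rfl fun k _ => by
    rw [← Matrix.mul_kronecker_mul, ← Matrix.mul_kronecker_mul, ptraceE_sub, ptraceE_kron,
      ptraceE_kron]

end helpers

open scoped ComplexOrder in
/-- In the bipartite setup with `H = ∑_k S_k ⊗ E_k`, `R = tr_E`,
`J(μ) = μ ⊗ τ` and `L(ρ) = −i[H,ρ]`, the second-order coefficient
`F_{(2)} = R L² J − (R L J)²` equals
`μ ↦ ∑_{j,k} χ_{j,k} (2 S_j μ S_k − {S_k S_j, μ})` with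
`χ_{j,k} = tr(E_j τ E_k) − tr(τ E_j) tr(τ E_k)`. -/
theorem second_order_coefficient_bipartite (dS dE r : ℕ)
    (S : Fin r → Matrix (Fin dS) (Fin dS) ℂ) (hS : ∀ k, (S k).IsHermitian)
    (E : Fin r → Matrix (Fin dE) (Fin dE) ℂ) (hE : ∀ k, (E k).IsHermitian)
    (H : Matrix (Fin dS × Fin dE) (Fin dS × Fin dE) ℂ)
    (hH : H = ∑ k : Fin r, (S k) ⊗ₖ (E k))
    (τ : Matrix (Fin dE) (Fin dE) ℂ) (hτ : τ.PosSemidef) (hτtr : τ.trace = 1)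
    (Lop : Matrix (Fin dS × Fin dE) (Fin dS × Fin dE) ℂ →
           Matrix (Fin dS × Fin dE) (Fin dS × Fin dE) ℂ)
    (hLop : ∀ ρ, Lop ρ = (-Complex.I) • (H * ρ - ρ * H))
    (χ : Fin r → Fin r → ℂ)
    (hχ : ∀ j k, χ j k = (E j * τ * E k).trace - (τ * E j).trace * (τ * E k).trace) :
    ∀ μ : Matrix (Fin dS) (Fin dS) ℂ,
      ptraceE (Lop (Lop (μ ⊗ₖ τ))) - ptraceE (Lop ((ptraceE (Lop (μ ⊗ₖ τ))) ⊗ₖ τ)) =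
        ∑ j : Fin r, ∑ k : Fin r, χ j k •
          ((2 : ℂ) • (S j * μ * S k) - (S k * S j * μ + μ * (S k * S j))) := by
  intro μ
  have hII : (-Complex.I) * (-Complex.I) = (-1 : ℂ) := by
    rw [neg_mul_neg, Complex.I_mul_I]
  have hX : Lop (μ ⊗ₖ τ)
      = (-Complex.I) • ∑ k, ((S k * μ) ⊗ₖ (E k * τ) - (μ * S k) ⊗ₖ (τ * E k)) := by
    rw [hLop, hH, Matrix.sum_mul, Matrix.mul_sum, ← Finset.sum_sub_distrib]
    congr 1
    exact Finset.sum_congr rfl fun k _ => by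
      rw [Matrix.mul_kronecker_mul, Matrix.mul_kronecker_mul]
  have hT1 : ptraceE (Lop (Lop (μ ⊗ₖ τ)))
      = (-1 : ℂ) • ∑ k, ∑ j,
          ((E k * τ * E j).trace • (S j * (S k * μ))
            - (E k * τ * E j).trace • (S k * μ * S j)
            - (E j * τ * E k).trace • (S j * (μ * S k))
            + (E j * τ * E k).trace • (μ * S k * S j)) := by
    rw [hLop (Lop (μ ⊗ₖ τ)), hX, hH, Matrix.mul_smul, Matrix.smul_mul, ← smul_sub,
      ptraceE_smul, ptraceE_smul, smul_smul, hII]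
    congr 1
    rw [Matrix.mul_sum, Matrix.sum_mul, ← Finset.sum_sub_distrib, ptraceE_sum]
    refine Finset.sum_congr rfl fun k _ => ?_
    have hsplit : (∑ i, S i ⊗ₖ E i) * ((S k * μ) ⊗ₖ (E k * τ) - (μ * S k) ⊗ₖ (τ * E k))
          - ((S k * μ) ⊗ₖ (E k * τ) - (μ * S k) ⊗ₖ (τ * E k)) * (∑ i, S i ⊗ₖ E i)
        = ((∑ i, S i ⊗ₖ E i) * ((S k * μ) ⊗ₖ (E k * τ))
            - ((S k * μ) ⊗ₖ (E k * τ)) * (∑ i, S i ⊗ₖ E i))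
          - ((∑ i, S i ⊗ₖ E i) * ((μ * S k) ⊗ₖ (τ * E k))
            - ((μ * S k) ⊗ₖ (τ * E k)) * (∑ i, S i ⊗ₖ E i)) := by
      noncomm_ring
    rw [hsplit, ptraceE_sub, comm_expand, comm_expand, ← Finset.sum_sub_distrib]
    refine Finset.sum_congr rfl fun j _ => ?_
    rw [Matrix.trace_mul_comm (E j) (E k * τ), Matrix.trace_mul_comm (τ * E k) (E j)]
    simp only [mul_assoc]
    module
  have hν : ptraceE (Lop (μ ⊗ₖ τ))
      = (-Complex.I) • ∑ k, ((τ * E k).trace • (S k * μ) - (τ * E k).trace • (μ * S k)) := by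
    rw [hLop, hH, ptraceE_smul, comm_expand]
    congr 1
    exact Finset.sum_congr rfl fun k _ => by rw [Matrix.trace_mul_comm (E k) τ]
  have hT2 : ptraceE (Lop ((ptraceE (Lop (μ ⊗ₖ τ))) ⊗ₖ τ))
      = (-1 : ℂ) • ∑ k, ∑ j,
          (((τ * E k).trace * (τ * E j).trace) • (S j * (S k * μ))
            - ((τ * E k).trace * (τ * E j).trace) • (S k * μ * S j)
            - ((τ * E k).trace * (τ * E j).trace) • (S j * (μ * S k))
            + ((τ * E k).trace * (τ * E j).trace) • (μ * S k * S j)) := by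
    rw [hν, smul_kronecker, sum_kron]
    have hkr : ∀ k : Fin r, ((τ * E k).trace • (S k * μ) - (τ * E k).trace • (μ * S k)) ⊗ₖ τ
        = (τ * E k).trace • ((S k * μ) ⊗ₖ τ) - (τ * E k).trace • ((μ * S k) ⊗ₖ τ) := by
      intro k; rw [sub_kron, smul_kronecker, smul_kronecker]
    simp only [hkr]
    rw [hLop, hH, Matrix.mul_smul, Matrix.smul_mul, ← smul_sub, ptraceE_smul,
      ptraceE_smul, smul_smul, hII]
    congr 1
    rw [Matrix.mul_sum, Matrix.sum_mul, ← Finset.sum_sub_distrib, ptraceE_sum]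
    refine Finset.sum_congr rfl fun k _ => ?_
    have hsplit : (∑ i, S i ⊗ₖ E i) * ((τ * E k).trace • ((S k * μ) ⊗ₖ τ)
            - (τ * E k).trace • ((μ * S k) ⊗ₖ τ))
          - ((τ * E k).trace • ((S k * μ) ⊗ₖ τ) - (τ * E k).trace • ((μ * S k) ⊗ₖ τ))
            * (∑ i, S i ⊗ₖ E i)
        = (τ * E k).trace • ((∑ i, S i ⊗ₖ E i) * ((S k * μ) ⊗ₖ τ)
              - ((S k * μ) ⊗ₖ τ) * (∑ i, S i ⊗ₖ E i))
          - (τ * E k).trace • ((∑ i, S i ⊗ₖ E i) * ((μ * S k) ⊗ₖ τ)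
              - ((μ * S k) ⊗ₖ τ) * (∑ i, S i ⊗ₖ E i)) := by
      rw [mul_sub, sub_mul, Matrix.mul_smul, Matrix.mul_smul, Matrix.smul_mul,
        Matrix.smul_mul]
      module
    rw [hsplit, ptraceE_sub, ptraceE_smul, ptraceE_smul, comm_expand, comm_expand,
      Finset.smul_sum, Finset.smul_sum, ← Finset.sum_sub_distrib]
    refine Finset.sum_congr rfl fun j _ => ?_
    rw [Matrix.trace_mul_comm (E j) τ]
    simp only [mul_assoc]
    module
  rw [hT1, hT2, neg_one_smul, neg_one_smul, sub_neg_eq_add, ← sub_eq_neg_add,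
    ← Finset.sum_sub_distrib]
  rw [Finset.sum_comm]
  rw [← sub_eq_zero, ← Finset.sum_sub_distrib]
  have hterm : ∀ j k : Fin r, (((((τ * E k).trace * (τ * E j).trace) • (S j * (S k * μ))
            - ((τ * E k).trace * (τ * E j).trace) • (S k * μ * S j)
            - ((τ * E k).trace * (τ * E j).trace) • (S j * (μ * S k))
            + ((τ * E k).trace * (τ * E j).trace) • (μ * S k * S j))
          - ((E k * τ * E j).trace • (S j * (S k * μ))
            - (E k * τ * E j).trace • (S k * μ * S j)
            - (E j * τ * E k).trace • (S j * (μ * S k))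
            + (E j * τ * E k).trace • (μ * S k * S j)))
          - χ j k • ((2 : ℂ) • (S j * μ * S k) - (S k * S j * μ + μ * (S k * S j))))
        = (((τ * E j).trace * (τ * E k).trace - (E k * τ * E j).trace)
              • (S j * (S k * μ) - S k * (μ * S j)))
          - (((τ * E k).trace * (τ * E j).trace - (E j * τ * E k).trace)
              • (S k * (S j * μ) - S j * (μ * S k))) := by
    intro j k
    rw [hχ]
    simp only [mul_assoc]
    module
  simp only [← Finset.sum_sub_distrib]
  refine (Finset.sum_congr rfl fun k _ => Finset.sum_congr rfl fun j _ => hterm j k).trans ?_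
  simp only [Finset.sum_sub_distrib]
  rw [sub_eq_zero]
  exact Finset.sum_comm
end

section
/- With F_{(k)} defined by the recursion F_{(k)} = k·(R L^k J)/k! − Σ_{h=1}^{k-1} F_{(k-h)} (R L^h J)/h! (R J = I_m), for any N the truncated exponential series satisfies Σ_{k=0}^{N} (t^k/k!) R L^k J = Σ_{k=0}^{N} t^k E_{(k)}, where E_{(k)} is defined via E_{(0)} = I, E_{(k)} = (1/k) Σ_{s=1}^{k} F_{(s)} E_{(k-s)}. In other words, the Taylor coefficients of R e^{Lt} J up to order N are matched exactly by the recursion. -/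
open Matrix Finset

/-- With `F_{(k)}` defined by the recursion
`F_{(k)} = k (R L^k J)/k! − ∑_{h=1}^{k-1} F_{(k-h)} (R L^h J)/h!` (`R J = I`) and
`E_{(k)}` by `E_{(0)} = I`, `E_{(k)} = (1/k) ∑_{s=1}^k F_{(s)} E_{(k-s)}`, the
truncated exponential series satisfies
`∑_{k=0}^N (t^k/k!) R L^k J = ∑_{k=0}^N t^k E_{(k)}` for all `t`. -/
theorem taylor_coefficients_matched (n m N : ℕ)
    (L : Matrix (Fin n) (Fin n) ℂ) (R : Matrix (Fin m) (Fin n) ℂ)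
    (J : Matrix (Fin n) (Fin m) ℂ) (hRJ : R * J = 1)
    (F E : ℕ → Matrix (Fin m) (Fin m) ℂ)
    (hF : ∀ k, 1 ≤ k →
      F k = (k : ℂ) • ((k.factorial : ℂ))⁻¹ • (R * L ^ k * J) -
        ∑ h ∈ Finset.Icc 1 (k - 1), F (k - h) * (((h.factorial : ℂ))⁻¹ • (R * L ^ h * J)))
    (hE0 : E 0 = 1)
    (hE : ∀ k, 1 ≤ k →
      E k = ((k : ℂ))⁻¹ • ∑ s ∈ Finset.Icc 1 k, F s * E (k - s)) :
    ∀ t : ℝ,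
      ∑ k ∈ Finset.range (N + 1), ((t : ℂ) ^ k / (k.factorial : ℂ)) • (R * L ^ k * J) =
      ∑ k ∈ Finset.range (N + 1), ((t : ℂ) ^ k) • E k := by
  have key : ∀ k, E k = ((k.factorial : ℂ))⁻¹ • (R * L ^ k * J) := by
    intro k
    induction k using Nat.strong_induction_on with
    | _ k ih =>
      match k with
      | 0 => simp [hE0, hRJ]
      | Nat.succ j =>
        have hk1 : 1 ≤ j + 1 := Nat.le_add_left 1 j
        have hsum : ∑ s ∈ Finset.Icc 1 (j + 1), F s * E (j + 1 - s)
            = (((j+1 : ℕ) : ℂ)) • (((j+1).factorial : ℂ))⁻¹ • (R * L ^ (j+1) * J) := by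
          rw [Finset.sum_Icc_succ_top hk1]
          have hE0' : E (j + 1 - (j + 1)) = 1 := by simp [hE0]
          rw [hE0', mul_one]
          have hre : ∑ s ∈ Finset.Icc 1 j, F s * E (j + 1 - s)
              = ∑ h ∈ Finset.Icc 1 ((j+1) - 1), F ((j+1) - h) *
                  ((((h.factorial : ℂ)))⁻¹ • (R * L ^ h * J)) := by
            simp only [Nat.add_sub_cancel]
            apply Finset.sum_nbij' (fun s => j + 1 - s) (fun h => j + 1 - h)
            · intro a ha; simp at ha ⊢; omega
            · intro a ha; simp at ha ⊢; omega
            · intro a ha; simp at ha; omega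
            · intro a ha; simp at ha; omega
            · intro s hs
              simp at hs
              have h1 : j + 1 - (j + 1 - s) = s := by omega
              rw [h1, ih (j + 1 - s) (by omega)]
          rw [hre, hF (j+1) hk1]
          abel
        rw [hE (j+1) hk1, hsum, smul_smul, smul_smul]
        congr 1
        have : ((j+1 : ℕ) : ℂ) ≠ 0 := by exact_mod_cast Nat.succ_ne_zero j
        rw [inv_mul_cancel₀ this, one_mul]
  intro t
  apply Finset.sum_congr rfl
  intro k _
  rw [key k, smul_smul, div_eq_mul_inv]
end
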